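/- (Banach contraction principle in a g-metric space) Let g be a g-metric with order n on a nonempty set Ω such that (Ω, g) is complete, and let T: Ω → Ω be a mapping for which there exists λ ∈ [0,1) with g(T(x₀), T(x₁), …, T(xₙ)) ≤ λ · g(x₀, x₁, …, xₙ) for all x₀, …, xₙ ∈ Ω. Then T has a unique fixed point in Ω. -/

import Mathlib

open scoped Classical

/-- A *g-metric with order `n`* on `Ω`: a nonnegative real-valued function of `n+1` points
satisfying positive definiteness, permutation invariance, monotonicity, and the
generalized triangle inequality. -/
structure IsGMetric {Ω : Type*} (n : ℕ) (g : (Fin (n + 1) → Ω) → ℝ) : Prop where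
  nonneg : ∀ x, 0 ≤ g x
  eq_zero_iff : ∀ x, g x = 0 ↔ ∀ i j, x i = x j
  perm_inv : ∀ (x : Fin (n + 1) → Ω) (σ : Equiv.Perm (Fin (n + 1))), g (x ∘ σ) = g x
  mono : ∀ x y : Fin (n + 1) → Ω, Set.range x ⊂ Set.range y → g x ≤ g y
  triangle : ∀ s : ℕ, s < n → ∀ (x y : Fin (n + 1) → Ω) (w : Ω),
    g (fun i => if i.val ≤ s then x i else y i) ≤
      g (fun i => if i.val ≤ s then x i else w) + g (fun i => if i.val ≤ s then w else y i)

namespace GAux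

variable {Ω : Type*} {n : ℕ}

/-- vector with value `a` at position `i₀` and `b` elsewhere -/
def pv (a b : Ω) (i₀ : Fin (n + 1)) : Fin (n + 1) → Ω := fun i => if i = i₀ then a else b

def dd (g : (Fin (n + 1) → Ω) → ℝ) (a b : Ω) : ℝ := g (pv a b 0)

variable {g : (Fin (n + 1) → Ω) → ℝ}

lemma pv_perm (hg : IsGMetric n g) (a b : Ω) (i j : Fin (n + 1)) :
    g (pv a b i) = g (pv a b j) := by
  have e : (pv a b j) ∘ (Equiv.swap i j) = pv a b i := by
    funext k
    simp only [pv, Function.comp_apply]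
    have h : Equiv.swap i j k = j ↔ k = i := by
      rw [Equiv.apply_eq_iff_eq_symm_apply, Equiv.symm_swap, Equiv.swap_apply_right]
    by_cases hk : k = i
    · rw [if_pos (h.mpr hk), if_pos hk]
    · rw [if_neg (fun hc => hk (h.mp hc)), if_neg hk]
  rw [← e, hg.perm_inv]

lemma dd_nonneg (hg : IsGMetric n g) (a b : Ω) : 0 ≤ dd g a b := hg.nonneg _

lemma dd_self (hg : IsGMetric n g) (a : Ω) : dd g a a = 0 := by
  refine (hg.eq_zero_iff _).mpr fun i j => ?_
  simp only [pv]; split_ifs <;> rfl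

lemma dd_eq_zero (hn : 1 ≤ n) (hg : IsGMetric n g) {a b : Ω} (h : dd g a b = 0) : a = b := by
  have h2 := (hg.eq_zero_iff _).mp h 0 ⟨1, by omega⟩
  simpa [pv, Fin.ext_iff] using h2

lemma dd_tri (hn : 1 ≤ n) (hg : IsGMetric n g) (a b w : Ω) :
    dd g a b ≤ dd g a w + dd g w b := by
  have h := hg.triangle 0 (by omega) (fun _ => a) (fun _ => b) w
  have e : ∀ c d : Ω, (fun i : Fin (n+1) => if i.val ≤ 0 then c else d) = pv c d 0 := by
    intro c d; funext i
    have hi0 : i.val ≤ 0 ↔ i = 0 := by rw [Nat.le_zero, Fin.ext_iff, Fin.val_zero]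
    simp only [pv, hi0]
  rw [e a b, e a w, e w b] at h
  exact h

lemma dd_contract {T : Ω → Ω} {lam : ℝ}
    (hT : ∀ x : Fin (n + 1) → Ω, g (fun i => T (x i)) ≤ lam * g x) (a b : Ω) :
    dd g (T a) (T b) ≤ lam * dd g a b := by
  have e : (fun i : Fin (n+1) => T (pv a b 0 i)) = pv (T a) (T b) 0 := by
    funext i; simp [pv, apply_ite T]
  have := hT (pv a b 0)
  rw [e] at this
  exact this

lemma decomp (hg : IsGMetric n g) (z : Fin (n + 1) → Ω) (w : Ω) :
    g z ≤ ∑ j : Fin (n + 1), dd g (z j) w := by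
  set Z : ℕ → (Fin (n + 1) → Ω) := fun k i => if i.val < k then w else z i with hZ
  have claim : ∀ m k, k + m = n + 1 →
      g (Z k) ≤ ∑ j : Fin (n + 1), if k ≤ j.val then dd g (z j) w else 0 := by
    intro m
    induction m with
    | zero =>
      intro k hk
      have e : Z k = fun _ => w := by
        funext i; simp only [Z]; rw [if_pos (by omega)]
      have h0 : g (Z k) = 0 := by
        rw [e]; exact (hg.eq_zero_iff _).mpr fun i j => rfl
      have hs : ∀ j : Fin (n + 1), (if k ≤ j.val then dd g (z j) w else 0) = 0 := by
        intro j; rw [if_neg (by omega)]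
      rw [h0, Finset.sum_congr rfl (fun j _ => hs j), Finset.sum_const, smul_zero]
    | succ m ih =>
      intro k hk
      set kf : Fin (n + 1) := ⟨k, by omega⟩ with hkf
      have hsplit : ∀ j : Fin (n + 1), (if k ≤ j.val then dd g (z j) w else 0) =
          (if j = kf then dd g (z j) w else 0) + (if k + 1 ≤ j.val then dd g (z j) w else 0) := by
        intro j
        have : j = kf ↔ j.val = k := by rw [Fin.ext_iff]
        split_ifs with h1 h2 h3 <;> simp_all <;> omega
      have hsum : (∑ j : Fin (n + 1), if k ≤ j.val then dd g (z j) w else 0) =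
          dd g (z kf) w + ∑ j : Fin (n + 1), if k + 1 ≤ j.val then dd g (z j) w else 0 := by
        rw [Finset.sum_congr rfl (fun j _ => hsplit j), Finset.sum_add_distrib]
        congr 1
        simp
      rcases eq_or_lt_of_le (show k ≤ n by omega) with heq | hlt
      · -- k = n : Z k is pv (z kf) w kf
        have e : Z k = pv (z kf) w kf := by
          funext i
          by_cases hi : i = kf
          · subst hi
            have hkv : (kf : ℕ) = k := rfl
            show (if (kf : ℕ) < k then w else z kf) = (if kf = kf then z kf else w)
            rw [if_neg (by omega), if_pos rfl]
          · have : i.val ≠ k := fun hc => hi (Fin.ext hc)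
            have hik : i.val < k := by omega
            simp only [Z, pv]; rw [if_pos hik, if_neg hi]
        have hg1 : g (Z k) = dd g (z kf) w := by
          rw [e]; exact pv_perm hg _ _ _ _
        have hs2 : ∀ j : Fin (n + 1), (if k + 1 ≤ j.val then dd g (z j) w else 0) = 0 := by
          intro j; rw [if_neg (by omega)]
        rw [hsum, hg1, Finset.sum_congr rfl (fun j _ => hs2 j), Finset.sum_const, smul_zero,
          add_zero]
      · -- k < n : use triangle
        have h := hg.triangle k hlt (Z k) z w
        have eA : (fun i : Fin (n+1) => if i.val ≤ k then Z k i else z i) = Z k := by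
          funext i; simp only [Z]; split_ifs with h1 h2 <;> first | rfl | omega
        have eB : (fun i : Fin (n+1) => if i.val ≤ k then Z k i else w) = pv (z kf) w kf := by
          funext i
          by_cases hi : i = kf
          · subst hi
            have hkv : (kf : ℕ) = k := rfl
            show (if (kf : ℕ) ≤ k then Z k kf else w) = (if kf = kf then z kf else w)
            rw [if_pos (le_refl k), if_pos rfl]
            show (if (kf : ℕ) < k then w else z kf) = z kf
            rw [if_neg (by omega)]
          · have hne : i.val ≠ k := fun hc => hi (Fin.ext hc)
            simp only [Z, pv]
            rw [if_neg hi]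
            split_ifs with h1 h2 <;> first | rfl | omega
        have eC : (fun i : Fin (n+1) => if i.val ≤ k then w else z i) = Z (k + 1) := by
          funext i; simp only [Z]
          split_ifs with h1 h2 <;> first | rfl | omega
        rw [eA, eB, eC] at h
        have hB : g (pv (z kf) w kf) = dd g (z kf) w := pv_perm hg _ _ _ _
        have := ih (k + 1) (by omega)
        rw [hsum]
        calc g (Z k) ≤ g (pv (z kf) w kf) + g (Z (k + 1)) := h
          _ = dd g (z kf) w + g (Z (k + 1)) := by rw [hB]
          _ ≤ dd g (z kf) w + ∑ j : Fin (n + 1), if k + 1 ≤ j.val then dd g (z j) w else 0 := by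
              linarith
  have h0 := claim (n + 1) 0 (by omega)
  have eZ : Z 0 = z := by funext i; simp [Z]
  have es : ∀ j : Fin (n + 1), (if 0 ≤ j.val then dd g (z j) w else 0) = dd g (z j) w := by
    intro j; rw [if_pos (Nat.zero_le _)]
  rw [eZ, Finset.sum_congr rfl (fun j _ => es j)] at h0
  exact h0

end GAux

/-- A sequence `xseq` in a g-metric space `(Ω, g)` g-converges to `x`. -/
def GConv {Ω : Type*} {n : ℕ} (g : (Fin (n + 1) → Ω) → ℝ) (xseq : ℕ → Ω) (x : Ω) : Prop :=
  ∀ ε : ℝ, 0 < ε → ∃ N : ℕ, ∀ idx : Fin n → ℕ, (∀ k, N ≤ idx k) →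
    g (Fin.cons x (fun k => xseq (idx k))) < ε

/-- A sequence `xseq` in a g-metric space `(Ω, g)` is g-Cauchy. -/
def GCauchy {Ω : Type*} {n : ℕ} (g : (Fin (n + 1) → Ω) → ℝ) (xseq : ℕ → Ω) : Prop :=
  ∀ ε : ℝ, 0 < ε → ∃ N : ℕ, ∀ idx : Fin (n + 1) → ℕ, (∀ k, N ≤ idx k) →
    g (fun k => xseq (idx k)) < ε

/-- Banach contraction mapping principle in a complete g-metric space. -/
theorem gMetric_banach {Ω : Type*} [Nonempty Ω] {n : ℕ} (hn : 1 ≤ n)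
    (g : (Fin (n + 1) → Ω) → ℝ) (hg : IsGMetric n g)
    (hcomplete : ∀ xseq : ℕ → Ω, GCauchy g xseq → ∃ x : Ω, GConv g xseq x)
    (T : Ω → Ω) (lam : ℝ) (hlam0 : 0 ≤ lam) (hlam1 : lam < 1)
    (hT : ∀ x : Fin (n + 1) → Ω, g (fun i => T (x i)) ≤ lam * g x) :
    ∃! y : Ω, T y = y := by
  classical
  open GAux in
  set x0 : Ω := Classical.arbitrary Ω with hx0
  set xs : ℕ → Ω := fun k => T^[k] x0 with hxs
  have hxsucc : ∀ k, xs (k + 1) = T (xs k) := fun k => Function.iterate_succ_apply' T k x0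
  set D : ℝ := dd g (xs 0) (xs 1) with hD
  have hD0 : 0 ≤ D := dd_nonneg hg _ _
  have hl1 : 0 < 1 - lam := by linarith
  set c : ℝ := D / (1 - lam) with hc
  have hc0 : 0 ≤ c := div_nonneg hD0 hl1.le
  have hDc : D = c * (1 - lam) := by
    rw [hc, div_mul_cancel₀]; exact hl1.ne'
  have hstep : ∀ k, dd g (xs k) (xs (k + 1)) ≤ lam ^ k * D := by
    intro k
    induction k with
    | zero => simp; exact le_rfl
    | succ k ih =>
      rw [hxsucc k, hxsucc (k + 1)]
      calc dd g (T (xs k)) (T (xs (k + 1))) ≤ lam * dd g (xs k) (xs (k + 1)) :=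
            dd_contract hT _ _
        _ ≤ lam * (lam ^ k * D) := by
            exact mul_le_mul_of_nonneg_left ih hlam0
        _ = lam ^ (k + 1) * D := by ring
  have hchain : ∀ p i, dd g (xs i) (xs (i + p)) ≤ lam ^ i * c - lam ^ (i + p) * c := by
    intro p
    induction p with
    | zero => intro i; simp [dd_self hg]
    | succ p ih =>
      intro i
      have h1 := dd_tri hn hg (xs i) (xs (i + (p + 1))) (xs (i + 1))
      have h2 := hstep i
      have h3 := ih (i + 1)
      have e : i + 1 + p = i + (p + 1) := by omega
      rw [e] at h3
      have hpow : lam ^ (i + 1) = lam ^ i * lam := pow_succ lam i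
      calc dd g (xs i) (xs (i + (p + 1)))
          ≤ dd g (xs i) (xs (i + 1)) + dd g (xs (i + 1)) (xs (i + (p + 1))) := h1
        _ ≤ lam ^ i * D + (lam ^ (i + 1) * c - lam ^ (i + (p + 1)) * c) := by linarith
        _ = lam ^ i * c - lam ^ (i + (p + 1)) * c := by
            rw [hDc, hpow]; ring
  have hchain' : ∀ i m, i ≤ m → dd g (xs i) (xs m) ≤ lam ^ i * c := by
    intro i m him
    have := hchain (m - i) i
    rw [Nat.add_sub_cancel' him] at this
    have : dd g (xs i) (xs m) ≤ lam ^ i * c - lam ^ m * c := this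
    have hp : 0 ≤ lam ^ m * c := mul_nonneg (pow_nonneg hlam0 m) hc0
    linarith
  -- Cauchy
  have hCauchy : GCauchy g xs := by
    intro ε hε
    set K : ℝ := (n + 1 : ℝ) * c + 1 with hK
    have hK0 : 0 < K := by positivity
    obtain ⟨N, hN⟩ := exists_pow_lt_of_lt_one (div_pos hε hK0) hlam1
    refine ⟨N, fun idx hidx => ?_⟩
    set M : ℕ := Finset.univ.sup idx with hM
    have hMk : ∀ k, idx k ≤ M := fun k => Finset.le_sup (Finset.mem_univ k)
    have h1 : g (fun k => xs (idx k)) ≤ ∑ j : Fin (n + 1), dd g (xs (idx j)) (xs M) :=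
      decomp hg _ _
    have h2 : ∀ j : Fin (n + 1), dd g (xs (idx j)) (xs M) ≤ lam ^ N * c := by
      intro j
      calc dd g (xs (idx j)) (xs M) ≤ lam ^ (idx j) * c := hchain' _ _ (hMk j)
        _ ≤ lam ^ N * c :=
          mul_le_mul_of_nonneg_right (pow_le_pow_of_le_one hlam0 hlam1.le (hidx j)) hc0
    have h3 : (∑ j : Fin (n + 1), dd g (xs (idx j)) (xs M)) ≤ (n + 1 : ℝ) * (lam ^ N * c) := by
      calc (∑ j : Fin (n + 1), dd g (xs (idx j)) (xs M))
          ≤ ∑ _j : Fin (n + 1), lam ^ N * c := Finset.sum_le_sum (fun j _ => h2 j)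
        _ = (n + 1 : ℝ) * (lam ^ N * c) := by
            rw [Finset.sum_const, Finset.card_univ, Fintype.card_fin, nsmul_eq_mul]
            push_cast; ring
    have h4 : (n + 1 : ℝ) * (lam ^ N * c) < ε := by
      have hNp : 0 ≤ lam ^ N := pow_nonneg hlam0 N
      have h5 : (n + 1 : ℝ) * (lam ^ N * c) ≤ lam ^ N * K := by
        rw [hK]; nlinarith
      have h6 : lam ^ N * K < (ε / K) * K := mul_lt_mul_of_pos_right hN hK0
      rw [div_mul_cancel₀ _ hK0.ne'] at h6
      linarith
    linarith
  obtain ⟨x, hconv⟩ := hcomplete xs hCauchy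
  -- convergence in terms of dd
  have hconv' : ∀ ε : ℝ, 0 < ε → ∃ N, ∀ m, N ≤ m → dd g x (xs m) < ε := by
    intro ε hε
    obtain ⟨N, hN⟩ := hconv ε hε
    refine ⟨N, fun m hm => ?_⟩
    have := hN (fun _ => m) (fun _ => hm)
    have e : (Fin.cons x (fun _ : Fin n => xs m) : Fin (n + 1) → Ω) = pv x (xs m) 0 := by
      funext i
      refine Fin.cases ?_ (fun j => ?_) i
      · rfl
      · show xs m = pv x (xs m) 0 j.succ
        rw [pv, if_neg (Fin.succ_ne_zero j)]
    rw [e] at this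
    exact this
  -- fixed point
  have hfix : T x = x := by
    have key : ∀ ε : ℝ, 0 < ε → dd g (T x) x < ε := by
      intro ε hε
      have hnR : (0 : ℝ) < n := by exact_mod_cast hn
      obtain ⟨N, hN⟩ := hconv' (ε / (4 * n)) (by positivity)
      have h1 : dd g x (xs N) < ε / (4 * n) := hN N le_rfl
      have h2 : dd g x (xs (N + 1)) < ε / (4 * n) := hN (N + 1) (Nat.le_succ N)
      have ht1 : dd g (T x) (xs (N + 1)) ≤ lam * dd g x (xs N) := by
        rw [hxsucc N]; exact dd_contract hT _ _
      have ht1' : dd g (T x) (xs (N + 1)) < ε / (4 * n) := by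
        have hdn : 0 ≤ dd g x (xs N) := dd_nonneg hg _ _
        nlinarith
      have ht2 : dd g (xs (N + 1)) x ≤ (n : ℝ) * dd g x (xs (N + 1)) := by
        have hd := decomp hg (pv (xs (N + 1)) x 0) (xs (N + 1))
        have hsum : (∑ j : Fin (n + 1), dd g (pv (xs (N + 1)) x 0 j) (xs (N + 1))) =
            (n : ℝ) * dd g x (xs (N + 1)) := by
          rw [Fin.sum_univ_succ]
          have e0 : pv (xs (N + 1)) x (0 : Fin (n + 1)) 0 = xs (N + 1) := if_pos rfl
          have es : ∀ j : Fin n, pv (xs (N + 1)) x (0 : Fin (n + 1)) j.succ = x :=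
            fun j => if_neg (Fin.succ_ne_zero j)
          rw [e0, dd_self hg, zero_add]
          rw [Finset.sum_congr rfl (fun j _ => by rw [es j])]
          rw [Finset.sum_const, Finset.card_univ, Fintype.card_fin, nsmul_eq_mul]
        rw [hsum] at hd
        exact hd
      have ht2' : dd g (xs (N + 1)) x < ε / 4 := by
        have : (n : ℝ) * dd g x (xs (N + 1)) < (n : ℝ) * (ε / (4 * n)) :=
          mul_lt_mul_of_pos_left h2 hnR
        have he : (n : ℝ) * (ε / (4 * n)) = ε / 4 := by field_simp
        linarith [ht2, he ▸ this]
      have htri := dd_tri hn hg (T x) x (xs (N + 1))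
      have hq : ε / (4 * n) ≤ ε / 4 := by
        have hn1 : (1 : ℝ) ≤ n := by exact_mod_cast hn
        rw [div_le_div_iff₀ (by positivity) (by norm_num)]
        nlinarith [mul_le_mul_of_nonneg_left hn1 hε.le]
      linarith
    have h0 : dd g (T x) x = 0 := by
      by_contra h
      have hpos : 0 < dd g (T x) x := lt_of_le_of_ne (dd_nonneg hg _ _) (Ne.symm h)
      exact lt_irrefl _ (key _ hpos)
    exact dd_eq_zero hn hg h0
  refine ⟨x, hfix, fun y hy => ?_⟩
  have h1 : dd g y x = dd g (T y) (T x) := by rw [hy, hfix]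
  have h2 : dd g (T y) (T x) ≤ lam * dd g y x := dd_contract hT _ _
  have h3 : 0 ≤ dd g y x := dd_nonneg hg _ _
  have h0 : dd g y x = 0 := by nlinarith
  exact dd_eq_zero hn hg h0
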